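/- Let c > 0, π̂ ∈ (0,1), and let π* and f be as in the explicit solution (f(x) = 2c(1-2x)log(x/(1-x)) + Āx + B̄ on [π̂,π*], f(x)=1-x on [π*,1], with f'(π̂)=0, f'(π*)=-1, f(π*)=1-π*). Then f is nonincreasing on [π̂,1] and 0 ≤ f(x) ≤ 1 for all x ∈ [π̂,1]. -/

import Mathlib

theorem stmt18 (c πh πs A B : ℝ) (hc : 0 < c)
    (h1 : 0 < πh) (h2 : πh < πs) (h3 : πs < 1)
    (Ψ : ℝ → ℝ) (hΨ : ∀ x, Ψ x = 2*c*(1-2*x)*Real.log (x/(1-x)))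
    (hA : A = -deriv Ψ πh)
    (hslope : deriv Ψ πs + A = -1)
    (hB : Ψ πs + A*πs + B = 1 - πs)
    (f : ℝ → ℝ)
    (hf : ∀ x, f x = if x ≤ πs then Ψ x + A*x + B else 1 - x) :
    AntitoneOn f (Set.Icc πh 1) ∧
    ∀ x ∈ Set.Icc πh 1, 0 ≤ f x ∧ f x ≤ 1 := by
  set D : ℝ → ℝ := fun x => -4*c*Real.log (x/(1-x)) + 2*c*((1-2*x)/(x*(1-x))) with hD
  have hΨeq : Ψ = fun t => 2*c*(1-2*t)*Real.log (t/(1-t)) := funext hΨ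
  -- derivative of Ψ
  have hderiv : ∀ x, 0 < x → x < 1 → HasDerivAt Ψ (D x) x := by
    intro x hx0 hx1
    have hx1' : 0 < 1 - x := by linarith
    have hxr : 0 < x / (1 - x) := div_pos hx0 hx1'
    have hratio : HasDerivAt (fun t => t / (1 - t)) (1 / (1 - x)^2) x := by
      have hu : HasDerivAt (fun t : ℝ => t) 1 x := hasDerivAt_id x
      have hv : HasDerivAt (fun t : ℝ => 1 - t) (-1) x := by
        simpa using (hasDerivAt_id x).const_sub 1
      have := hu.div hv (by linarith : (1:ℝ) - x ≠ 0)
      refine this.congr_deriv ?_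
      field_simp
      ring
    have hlog : HasDerivAt (fun t => Real.log (t / (1 - t)))
        (1 / (1 - x)^2 / (x / (1 - x))) x := hratio.log (ne_of_gt hxr)
    have hu : HasDerivAt (fun t : ℝ => 2*c*(1-2*t)) (-4*c) x := by
      have : HasDerivAt (fun t : ℝ => 1 - 2*t) (-2) x := by
        simpa using ((hasDerivAt_id x).const_mul 2).const_sub 1
      simpa [mul_comm, mul_assoc, mul_left_comm] using this.const_mul (2*c) |>.congr_deriv (by ring)
    have hprod := hu.mul hlog
    rw [hΨeq]
    refine hprod.congr_deriv ?_
    rw [hD]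
    field_simp
  have hderivΨh : deriv Ψ πh = D πh := (hderiv πh h1 (by linarith)).deriv
  have hderivΨs : deriv Ψ πs = D πs := (hderiv πs (by linarith) h3).deriv
  -- D is antitone on (0,1)
  have Dmono : ∀ x y, 0 < x → x ≤ y → y < 1 → D y ≤ D x := by
    intro x y hx0 hxy hy1
    have hx1 : 0 < 1 - x := by linarith
    have hy0 : 0 < y := lt_of_lt_of_le hx0 hxy
    have hy1' : 0 < 1 - y := by linarith
    have hrr : x / (1 - x) ≤ y / (1 - y) := by
      apply div_le_div₀ (le_of_lt hy0) hxy hy1' (by linarith)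
    have hlog : Real.log (x / (1 - x)) ≤ Real.log (y / (1 - y)) :=
      Real.log_le_log (div_pos hx0 hx1) hrr
    have e : ∀ t : ℝ, 0 < t → t < 1 → (1-2*t)/(t*(1-t)) = 1/t - 1/(1-t) := by
      intro t ht0 ht1
      have : (0:ℝ) < 1 - t := by linarith
      field_simp
      ring
    have e1 := e x hx0 (by linarith)
    have e2 := e y hy0 hy1
    have i1 : 1/y ≤ 1/x := one_div_le_one_div_of_le hx0 hxy
    have i2 : 1/(1-x) ≤ 1/(1-y) := one_div_le_one_div_of_le hy1' (by linarith)
    have hlog' : -4*c*Real.log (y/(1-y)) ≤ -4*c*Real.log (x/(1-x)) := by nlinarith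
    have hsec : 2*c*((1-2*y)/(y*(1-y))) ≤ 2*c*((1-2*x)/(x*(1-x))) := by
      rw [e1, e2]; nlinarith
    rw [hD]; dsimp only; linarith
  -- the smooth piece F
  set F : ℝ → ℝ := fun x => Ψ x + A*x + B with hF
  have hderF : ∀ x, 0 < x → x < 1 → HasDerivAt F (D x + A) x := by
    intro x hx0 hx1
    exact ((hderiv x hx0 hx1).add ((hasDerivAt_id x).const_mul A |>.congr_deriv
      (by ring))).add_const B |>.congr_deriv (by ring)
  have hsub : Set.Icc πh πs ⊆ Set.Ioo (0:ℝ) 1 := fun x hx =>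
    ⟨lt_of_lt_of_le h1 hx.1, lt_of_le_of_lt hx.2 h3⟩
  have hdiffF : ∀ x ∈ Set.Icc πh πs, DifferentiableAt ℝ F x := fun x hx =>
    (hderF x (hsub hx).1 (hsub hx).2).differentiableAt
  have hcontF : ContinuousOn F (Set.Icc πh πs) := fun x hx =>
    (hdiffF x hx).continuousAt.continuousWithinAt
  have hAeq : A = -D πh := by rw [hA, hderivΨh]
  have hslope' : D πs + A = -1 := by rw [← hderivΨs]; exact hslope
  -- F antitone on [πh, πs]
  have antF : AntitoneOn F (Set.Icc πh πs) := by
    apply antitoneOn_of_deriv_nonpos (convex_Icc _ _) hcontF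
    · intro x hx
      rw [interior_Icc] at hx
      exact (hdiffF x ⟨le_of_lt hx.1, le_of_lt hx.2⟩).differentiableWithinAt
    · intro x hx
      rw [interior_Icc] at hx
      rw [(hderF x (by linarith [hx.1]) (by linarith [hx.2])).deriv, hAeq]
      have := Dmono πh x h1 (le_of_lt hx.1) (by linarith [hx.2])
      linarith
  -- G = F + id monotone on [πh, πs]
  have monG : MonotoneOn (fun x => F x + x) (Set.Icc πh πs) := by
    apply monotoneOn_of_deriv_nonneg (convex_Icc _ _)
    · exact hcontF.add continuousOn_id
    · intro x hx
      rw [interior_Icc] at hx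
      exact ((hdiffF x ⟨le_of_lt hx.1, le_of_lt hx.2⟩).add differentiable_id.differentiableAt).differentiableWithinAt
    · intro x hx
      rw [interior_Icc] at hx
      have hd : HasDerivAt (fun x => F x + x) (D x + A + 1) x :=
        (hderF x (by linarith [hx.1]) (by linarith [hx.2])).add (hasDerivAt_id x)
      rw [hd.deriv]
      have := Dmono x πs (by linarith [hx.1]) (le_of_lt hx.2) h3
      linarith
  -- f agrees with pieces
  have hfF : ∀ x, x ≤ πs → f x = F x := by
    intro x hx; rw [hf x, if_pos hx]
  have hfs : f πs = 1 - πs := by rw [hfF πs le_rfl]; exact hB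
  have hf2 : ∀ x, πs ≤ x → f x = 1 - x := by
    intro x hx
    rcases eq_or_lt_of_le hx with h | h
    · rw [← h, hfs]
    · rw [hf x, if_neg (not_le_of_gt h)]
  -- antitone
  have hant : AntitoneOn f (Set.Icc πh 1) := by
    intro x hx y hy hxy
    by_cases hys : y ≤ πs
    · rw [hfF x (le_trans hxy hys), hfF y hys]
      exact antF ⟨hx.1, le_trans hxy hys⟩ ⟨hy.1, hys⟩ hxy
    · push_neg at hys
      rw [hf2 y (le_of_lt hys)]
      by_cases hxs : x ≤ πs
      · rw [hfF x hxs]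
        have h1' : F x ≥ F πs := antF ⟨hx.1, hxs⟩ ⟨le_of_lt h2, le_rfl⟩ hxs
        have : F πs = 1 - πs := hB
        linarith
      · push_neg at hxs
        rw [hf2 x (le_of_lt hxs)]
        linarith
  refine ⟨hant, fun x hx => ⟨?_, ?_⟩⟩
  · have h1mem : (1:ℝ) ∈ Set.Icc πh 1 := ⟨by linarith, le_rfl⟩
    have := hant hx h1mem hx.2
    rw [hf2 1 (le_of_lt h3)] at this
    linarith
  · by_cases hxs : x ≤ πs
    · have := monG ⟨hx.1, hxs⟩ ⟨le_of_lt h2, le_rfl⟩ hxs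
      have hFs : F πs = 1 - πs := hB
      rw [hfF x hxs]
      have hx0 : 0 < x := lt_of_lt_of_le h1 hx.1
      dsimp only at this
      linarith
    · push_neg at hxs
      rw [hf2 x (le_of_lt hxs)]
      have : 0 < x := by linarith
      linarith
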